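/- In the dynamic discrete choice setting, fix any measurable v, let w_{d,v}(x) = exp(u_d(x) + βE^M[v(X_{t+1})|X_t = x, D_t = d]) / Σ_{d'} exp(u_{d'}(x) + βE^M[v(X_{t+1})|X_t = x, D_t = d']) be the conditional choice probabilities, and define D_v f(x) = β Σ_d w_{d,v}(x) E^M[f(X_{t+1})|X_t = x, D_t = d]. Then for every s ≥ 1, D_v is a bounded linear operator on the Orlicz heart E^{φ_s}(Q₀) (Q₀ the stationary distribution of the uniform mixture kernel Q), and its spectral radius satisfies ρ(D_v; E^{φ_s}) ≤ c for every c ∈ (β, 1); in particular ρ(D_v; E^{φ_s}) < 1. -/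

import Mathlib

open MeasureTheory ProbabilityTheory

/-- The `φ_s`-Luxemburg norm with threshold 2, via the lower integral. -/
noncomputable def luxS {X : Type*} [MeasurableSpace X] (μ : Measure X) (s : ℝ)
    (f : X → ℝ) : ℝ :=
  sInf {c : ℝ | 0 < c ∧ ∫⁻ x, ENNReal.ofReal (Real.exp ((|f x| / c) ^ s)) ∂μ ≤ 2}

/-- Membership in the Orlicz heart `E^{φ_s}(μ)`. -/
def InHeart {X : Type*} [MeasurableSpace X] (μ : Measure X) (s : ℝ) (f : X → ℝ) : Prop :=
  Measurable f ∧ ∀ c > 0, ∫⁻ x, ENNReal.ofReal (Real.exp ((|f x| / c) ^ s)) ∂μ < ⊤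

open MeasureTheory ProbabilityTheory Real
open scoped ENNReal NNReal

lemma lint_rpow_le {X : Type*} [MeasurableSpace X] (μ : Measure X) [IsProbabilityMeasure μ]
    {h : X → ℝ≥0∞} (hh : AEMeasurable h μ) {ρ : ℝ} (h0 : 0 < ρ) (h1 : ρ ≤ 1) :
    ∫⁻ x, (h x) ^ ρ ∂μ ≤ (∫⁻ x, h x ∂μ) ^ ρ := by
  rcases eq_or_lt_of_le h1 with he | hlt
  · simp [he]
  · have hpq : (1/ρ).HolderConjugate (1/(1-ρ)) := by
      rw [Real.holderConjugate_iff]; constructor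
      · rw [one_div]
        exact (one_lt_inv_iff₀).2 ⟨h0, hlt⟩
      · simp only [one_div, inv_inv]
        ring
    have hmain := ENNReal.lintegral_mul_le_Lp_mul_Lq μ hpq
      (f := fun x => h x ^ ρ) (g := fun _ => 1) (hh.pow aemeasurable_const) aemeasurable_const
    simp only [Pi.mul_apply, mul_one, ENNReal.one_rpow, lintegral_one, measure_univ,
      one_div, inv_inv] at hmain
    refine hmain.trans (le_of_eq ?_)
    congr 1
    refine lintegral_congr fun x => ?_
    rw [← ENNReal.rpow_mul, mul_inv_cancel₀ h0.ne', ENNReal.rpow_one]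

lemma exp_jensen {X : Type*} [MeasurableSpace X] (μ : Measure X) [IsProbabilityMeasure μ]
    {G : X → ℝ} (hGi : Integrable G μ) (hGe : Integrable (fun x => Real.exp (G x)) μ) :
    Real.exp (∫ x, G x ∂μ) ≤ ∫ x, Real.exp (G x) ∂μ := by
  set m := ∫ x, G x ∂μ with hm
  have key : ∀ x, Real.exp m * (1 + (G x - m)) ≤ Real.exp (G x) := by
    intro x
    have h1 : (G x - m) + 1 ≤ Real.exp (G x - m) := Real.add_one_le_exp _
    have h2 : Real.exp m * ((G x - m) + 1) ≤ Real.exp m * Real.exp (G x - m) :=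
      mul_le_mul_of_nonneg_left h1 (Real.exp_pos m).le
    rw [← Real.exp_add, add_sub_cancel] at h2
    linarith [h2]
  have hint : Integrable (fun x => Real.exp m * (1 + (G x - m))) μ :=
    (((integrable_const (1:ℝ)).add (hGi.sub (integrable_const m)))).const_mul _
  have hmono := integral_mono hint hGe key
  have hGm : Integrable (fun a => G a - m) μ := hGi.sub (integrable_const m)
  have hcomp : ∫ x, Real.exp m * (1 + (G x - m)) ∂μ = Real.exp m := by
    rw [integral_const_mul, integral_add (integrable_const _) hGm,
      integral_sub hGi (integrable_const m), integral_const, integral_const]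
    simp [measure_univ, hm]
  rw [hcomp] at hmono
  exact hmono

lemma rpow_jensen {X : Type*} [MeasurableSpace X] (μ : Measure X) [IsProbabilityMeasure μ]
    {r : X → ℝ} (hr0 : ∀ x, 0 ≤ r x) (hri : Integrable r μ) {s : ℝ} (hs : 1 ≤ s)
    (hrs : Integrable (fun x => r x ^ s) μ) :
    (∫ x, r x ∂μ) ^ s ≤ ∫ x, r x ^ s ∂μ := by
  have hcv : ConvexOn ℝ (Set.Ici 0) fun x : ℝ => x ^ s := convexOn_rpow hs
  have hct : ContinuousOn (fun x : ℝ => x ^ s) (Set.Ici 0) := fun x _ =>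
    (Real.continuousAt_rpow_const x s (Or.inr (zero_le_one.trans hs))).continuousWithinAt
  exact hcv.map_integral_le hct isClosed_Ici
    (Filter.Eventually.of_forall fun x => hr0 x) hri hrs
noncomputable def Tsum {X : Type*} [MeasurableSpace X] {D : ℕ} (M : Fin D → Kernel X X)
    (h : X → ℝ≥0∞) (x : X) : ℝ≥0∞ := ∑ d, ∫⁻ y, h y ∂(M d) x

lemma Tsum_meas {X : Type*} [MeasurableSpace X] {D : ℕ} {M : Fin D → Kernel X X}
    (hM : ∀ d, IsMarkovKernel (M d)) {h : X → ℝ≥0∞} (hh : Measurable h) :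
    Measurable (Tsum M h) := by
  unfold Tsum
  refine Finset.measurable_sum _ fun d _ => ?_
  haveI := hM d
  exact Measurable.lintegral_kernel hh

lemma Tsum_iter_meas {X : Type*} [MeasurableSpace X] {D : ℕ} {M : Fin D → Kernel X X}
    (hM : ∀ d, IsMarkovKernel (M d)) {h : X → ℝ≥0∞} (hh : Measurable h) (n : ℕ) :
    Measurable ((Tsum M)^[n] h) := by
  induction n with
  | zero => exact hh
  | succ n ih => rw [Function.iterate_succ_apply']; exact Tsum_meas hM ih

lemma Tsum_mono {X : Type*} [MeasurableSpace X] {D : ℕ} {M : Fin D → Kernel X X}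
    {h h' : X → ℝ≥0∞} (hle : ∀ y, h y ≤ h' y) (x : X) : Tsum M h x ≤ Tsum M h' x :=
  Finset.sum_le_sum fun d _ => lintegral_mono hle

lemma stat_lint {X : Type*} [MeasurableSpace X] {D : ℕ} (hD : 0 < D) {M : Fin D → Kernel X X}
    (hM : ∀ d, IsMarkovKernel (M d)) (Q₀ : Measure X) [IsProbabilityMeasure Q₀]
    (hstat : ∀ s : Set X, MeasurableSet s →
      ∫⁻ x, ((D : ENNReal))⁻¹ * ∑ d, (M d) x s ∂Q₀ = Q₀ s)
    {h : X → ℝ≥0∞} (hh : Measurable h) :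
    ∫⁻ x, Tsum M h x ∂Q₀ = D * ∫⁻ x, h x ∂Q₀ := by
  have hD0 : (D : ℝ≥0∞) ≠ 0 := by exact_mod_cast hD.ne'
  have hDtop : (D : ℝ≥0∞) ≠ ⊤ := ENNReal.natCast_ne_top D
  set κ : X → Measure X := fun x => ∑ d, (M d) x with hκ
  have hκm : Measurable κ := by
    refine Measure.measurable_of_measurable_coe _ fun t ht => ?_
    simp only [hκ, Measure.finset_sum_apply]
    exact Finset.measurable_sum _ fun d _ => Kernel.measurable_coe (M d) ht
  have hbind : Q₀.bind κ = (D : ℝ≥0∞) • Q₀ := by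
    refine Measure.ext fun t ht => ?_
    rw [Measure.bind_apply ht hκm.aemeasurable]
    have h2 := hstat t ht
    have hmeas : Measurable fun x => ∑ d, (M d) x t :=
      Finset.measurable_sum _ fun d _ => Kernel.measurable_coe (M d) ht
    rw [lintegral_const_mul _ hmeas] at h2
    simp only [hκ, Measure.finset_sum_apply]
    rw [Measure.smul_apply, smul_eq_mul, ← h2, ← mul_assoc,
      ENNReal.mul_inv_cancel hD0 hDtop, one_mul]
  calc ∫⁻ x, Tsum M h x ∂Q₀ = ∫⁻ x, ∫⁻ y, h y ∂(κ x) ∂Q₀ := by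
        refine lintegral_congr fun x => ?_
        simp only [hκ, Tsum]
        rw [lintegral_finset_sum_measure]
  _ = ∫⁻ y, h y ∂(Q₀.bind κ) := (Measure.lintegral_bind hκm.aemeasurable hh.aemeasurable).symm
  _ = D * ∫⁻ x, h x ∂Q₀ := by rw [hbind, lintegral_smul_measure, smul_eq_mul]
lemma le_one_add_rpow {z s : ℝ} (hz : 0 ≤ z) (hs : 1 ≤ s) : z ≤ 1 + z ^ s := by
  rcases le_or_gt z 1 with h | h
  · have : (0:ℝ) ≤ z ^ s := Real.rpow_nonneg hz s
    linarith
  · have h1 : z ^ (1:ℝ) ≤ z ^ s := Real.rpow_le_rpow_of_exponent_le h.le hs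
    rw [Real.rpow_one] at h1
    linarith

lemma step_lemma {X : Type*} [MeasurableSpace X] {D : ℕ} (hD : 0 < D)
    {M : Fin D → Kernel X X} (hM : ∀ d, IsMarkovKernel (M d)) {β : ℝ} (hβ0 : 0 < β)
    {w : Fin D → X → ℝ} (hw0 : ∀ d x, 0 ≤ w d x) (hw1 : ∀ d x, w d x ≤ 1)
    (hwsum : ∀ x, ∑ d, w d x = 1)
    {s : ℝ} (hs : 1 ≤ s) {c : ℝ} (hc : β < c)
    {g : X → ℝ} (hg : Measurable g) {t : ℝ} (ht : 0 < t) (x : X) :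
    ENNReal.ofReal (Real.exp ((|β * ∑ d, w d x * ∫ y, g y ∂(M d) x| / (c * t)) ^ s))
      ≤ (∑ d, ∫⁻ y, ENNReal.ofReal (Real.exp ((|g y| / t) ^ s)) ∂(M d) x) ^ ((β/c) ^ s) := by
  have hc0 : 0 < c := hβ0.trans hc
  have hs0 : (0:ℝ) < s := lt_of_lt_of_le one_pos hs
  set θ : ℝ := (β/c) ^ s with hθ
  have hθ0 : 0 < θ := Real.rpow_pos_of_pos (div_pos hβ0 hc0) s
  set e : X → ℝ := fun y => Real.exp ((|g y| / t) ^ s) with he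
  set r : X → ℝ := fun y => |g y| / t with hr
  have hr0 : ∀ y, 0 ≤ r y := fun y => div_nonneg (abs_nonneg _) ht.le
  have her : ∀ y, e y = Real.exp (r y ^ s) := fun y => rfl
  have hem : Measurable e := by
    apply Measurable.exp
    exact (hg.abs.div_const t).pow measurable_const
  set A := ∑ d, ∫⁻ y, ENNReal.ofReal (e y) ∂(M d) x with hA
  show ENNReal.ofReal (Real.exp ((|β * ∑ d, w d x * ∫ y, g y ∂(M d) x| / (c * t)) ^ s)) ≤ A ^ θ
  by_cases hAtop : A = ⊤
  · rw [hAtop, ENNReal.top_rpow_of_pos hθ0]; exact le_top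
  -- finite case
  have had : ∀ d, ∫⁻ y, ENNReal.ofReal (e y) ∂(M d) x ≠ ⊤ := fun d => by
    intro habs
    exact hAtop (eq_top_iff.2 (habs ▸ Finset.single_le_sum
      (fun d _ => (zero_le : 0 ≤ ∫⁻ y, ENNReal.ofReal (e y) ∂(M d) x)) (Finset.mem_univ d)))
  have hed : ∀ d, Integrable e ((M d) x) := fun d => by
    haveI := hM d
    refine ⟨hem.aestronglyMeasurable, ?_⟩
    rw [hasFiniteIntegral_iff_ofReal (Filter.Eventually.of_forall fun y => (Real.exp_pos _).le)]
    exact (had d).lt_top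
  have hrs_le : ∀ y, r y ^ s ≤ e y := fun y => by
    rw [her]; linarith [Real.add_one_le_exp (r y ^ s)]
  have hrsd : ∀ d, Integrable (fun y => r y ^ s) ((M d) x) := fun d => by
    refine (hed d).mono' (((hg.abs.div_const t).pow measurable_const).aestronglyMeasurable)
      (Filter.Eventually.of_forall fun y => ?_)
    rw [Real.norm_eq_abs, abs_of_nonneg (Real.rpow_nonneg (hr0 y) s)]
    exact hrs_le y
  have hrd : ∀ d, Integrable r ((M d) x) := fun d => by
    haveI := hM d
    refine (((integrable_const (1:ℝ)).add (hrsd d)).mono'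
      ((hg.abs.div_const t).aestronglyMeasurable) (Filter.Eventually.of_forall fun y => ?_))
    rw [Real.norm_eq_abs, abs_of_nonneg (hr0 y)]
    exact le_one_add_rpow (hr0 y) hs
  -- the mixture probability measure
  set ν : Measure X := ∑ d, (ENNReal.ofReal (w d x)) • ((M d) x) with hν
  haveI hνp : IsProbabilityMeasure ν := by
    constructor
    rw [hν, Measure.finset_sum_apply]
    have : ∀ d : Fin D, ((ENNReal.ofReal (w d x)) • ((M d) x)) Set.univ
        = ENNReal.ofReal (w d x) := by
      intro d
      haveI := hM d
      rw [Measure.smul_apply, smul_eq_mul, measure_univ, mul_one]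
    rw [Finset.sum_congr rfl fun d _ => this d,
      ← ENNReal.ofReal_sum_of_nonneg (fun d _ => hw0 d x), hwsum x, ENNReal.ofReal_one]
  have hint_ν : ∀ {F : X → ℝ}, (∀ d, Integrable F ((M d) x)) → Integrable F ν := by
    intro F hF
    rw [hν]
    exact integrable_finset_sum_measure.mpr fun d _ => (hF d).smul_measure ENNReal.ofReal_ne_top
  have hrν : Integrable r ν := hint_ν hrd
  have hrsν : Integrable (fun y => r y ^ s) ν := hint_ν hrsd
  have heν : Integrable e ν := hint_ν hed
  set m := ∫ y, r y ∂ν with hm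
  have hm0 : 0 ≤ m := integral_nonneg hr0
  -- integral over ν decomposes
  have hdecomp : ∀ (F : X → ℝ), (∀ d, Integrable F ((M d) x)) →
      ∫ y, F y ∂ν = ∑ d, w d x * ∫ y, F y ∂(M d) x := by
    intro F hF
    rw [hν, integral_finset_sum_measure (fun d _ => (hF d).smul_measure ENNReal.ofReal_ne_top)]
    refine Finset.sum_congr rfl fun d _ => ?_
    rw [integral_smul_measure, ENNReal.toReal_ofReal (hw0 d x), smul_eq_mul]
  -- bound |Dv g x| by β * t * m
  have habs : |β * ∑ d, w d x * ∫ y, g y ∂(M d) x| ≤ β * (t * m) := by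
    have h1 : |∑ d, w d x * ∫ y, g y ∂(M d) x| ≤ ∑ d, w d x * ∫ y, |g y| ∂(M d) x := by
      refine (Finset.abs_sum_le_sum_abs _ _).trans (Finset.sum_le_sum fun d _ => ?_)
      rw [abs_mul, abs_of_nonneg (hw0 d x)]
      refine mul_le_mul_of_nonneg_left ?_ (hw0 d x)
      calc |∫ y, g y ∂(M d) x| = ‖∫ y, g y ∂(M d) x‖ := (Real.norm_eq_abs _).symm
      _ ≤ ∫ y, ‖g y‖ ∂(M d) x := norm_integral_le_integral_norm _
      _ = ∫ y, |g y| ∂(M d) x := by simp [Real.norm_eq_abs]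
    have h2 : t * m = ∑ d, w d x * ∫ y, |g y| ∂(M d) x := by
      rw [hm, hdecomp r hrd, Finset.mul_sum]
      refine Finset.sum_congr rfl fun d _ => ?_
      rw [hr]
      rw [integral_div, mul_comm t, mul_assoc, div_mul_cancel₀ _ ht.ne']
    rw [abs_mul, abs_of_pos hβ0, h2]
    exact mul_le_mul_of_nonneg_left h1 hβ0.le
  -- Jensen chain
  have hEm : m ^ s ≤ ∫ y, r y ^ s ∂ν := rpow_jensen ν hr0 hrν hs hrsν
  have hEJ : Real.exp (∫ y, r y ^ s ∂ν) ≤ ∫ y, e y ∂ν := by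
    have := exp_jensen ν hrsν (by simpa only [her] using heν)
    simpa only [← her] using this
  set J := ∫ y, e y ∂ν with hJ
  have hJ0 : 0 < J := lt_of_lt_of_le (Real.exp_pos _) hEJ
  have hreal : Real.exp ((|β * ∑ d, w d x * ∫ y, g y ∂(M d) x| / (c * t)) ^ s) ≤ J ^ θ := by
    have hq0 : (0:ℝ) ≤ |β * ∑ d, w d x * ∫ y, g y ∂(M d) x| / (c * t) :=
      div_nonneg (abs_nonneg _) (by positivity)
    have hdiv : |β * ∑ d, w d x * ∫ y, g y ∂(M d) x| / (c * t) ≤ (β/c) * m := by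
      rw [div_le_iff₀ (by positivity)]
      calc |β * ∑ d, w d x * ∫ y, g y ∂(M d) x| ≤ β * (t * m) := habs
      _ = β / c * m * (c * t) := by field_simp
    calc Real.exp ((|β * ∑ d, w d x * ∫ y, g y ∂(M d) x| / (c * t)) ^ s)
        ≤ Real.exp (((β/c) * m) ^ s) := by
          exact Real.exp_le_exp.2 (Real.rpow_le_rpow hq0 hdiv hs0.le)
    _ = Real.exp (θ * m ^ s) := by
          rw [Real.mul_rpow (div_nonneg hβ0.le hc0.le) hm0]
    _ ≤ Real.exp (θ * ∫ y, r y ^ s ∂ν) := by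
          exact Real.exp_le_exp.2 (mul_le_mul_of_nonneg_left hEm hθ0.le)
    _ = Real.exp (∫ y, r y ^ s ∂ν) ^ θ := by rw [mul_comm, Real.exp_mul]
    _ ≤ J ^ θ := Real.rpow_le_rpow (Real.exp_pos _).le hEJ hθ0.le
  calc ENNReal.ofReal (Real.exp ((|β * ∑ d, w d x * ∫ y, g y ∂(M d) x| / (c * t)) ^ s))
      ≤ ENNReal.ofReal (J ^ θ) := ENNReal.ofReal_le_ofReal hreal
  _ = (ENNReal.ofReal J) ^ θ := (ENNReal.ofReal_rpow_of_pos hJ0).symm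
  _ ≤ A ^ θ := by
      refine ENNReal.rpow_le_rpow ?_ hθ0.le
      rw [ofReal_integral_eq_lintegral_ofReal heν
        (Filter.Eventually.of_forall fun y => (Real.exp_pos _).le)]
      rw [hν, lintegral_finset_sum_measure]
      rw [hA]
      refine Finset.sum_le_sum fun d _ => ?_
      rw [lintegral_smul_measure]
      calc ENNReal.ofReal (w d x) * ∫⁻ y, ENNReal.ofReal (e y) ∂(M d) x
          ≤ 1 * ∫⁻ y, ENNReal.ofReal (e y) ∂(M d) x :=
            mul_le_mul_left (ENNReal.ofReal_le_one.2 (hw1 d x)) _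
      _ = _ := one_mul _
lemma nmul_pow_le {θ : ℝ} (h0 : 0 < θ) (h1 : θ < 1) (n : ℕ) : (n:ℝ) * θ ^ n ≤ θ / (1 - θ) := by
  have h1θ : (0:ℝ) < 1 - θ := by linarith
  have h2 : (n:ℝ) * θ ^ n ≤ ∑ k ∈ Finset.range n, θ ^ (k+1) := by
    have hb : ∀ k ∈ Finset.range n, θ ^ n ≤ θ ^ (k+1) := fun k hk =>
      pow_le_pow_of_le_one h0.le h1.le (Nat.succ_le_of_lt (Finset.mem_range.1 hk))
    calc (n:ℝ) * θ ^ n = ∑ _k ∈ Finset.range n, θ ^ n := by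
          rw [Finset.sum_const, Finset.card_range]; ring
    _ ≤ _ := Finset.sum_le_sum hb
  refine h2.trans ?_
  have h3 : ∑ k ∈ Finset.range n, θ ^ (k+1) = θ * ∑ k ∈ Finset.range n, θ ^ k := by
    rw [Finset.mul_sum]; exact Finset.sum_congr rfl fun k _ => by ring
  rw [h3, div_eq_mul_inv]
  refine mul_le_mul_of_nonneg_left ?_ h0.le
  have h4 : ∑ k ∈ Finset.range n, θ ^ k = (1 - θ ^ n)/(1 - θ) := by
    rw [geom_sum_eq h1.ne n, div_eq_div_iff (by linarith) h1θ.ne']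
    ring
  rw [h4, inv_eq_one_div]
  have hθn : (0:ℝ) ≤ θ ^ n := pow_nonneg h0.le n
  gcongr
  linarith

lemma exp_one_add_self_mul {x : ℝ} : Real.exp x ≤ 1 + x * Real.exp x := by
  have h1 : -x + 1 ≤ Real.exp (-x) := Real.add_one_le_exp (-x)
  rw [Real.exp_neg] at h1
  have h2 : 0 < Real.exp x := Real.exp_pos x
  have h3 : (-x + 1) * Real.exp x ≤ (Real.exp x)⁻¹ * Real.exp x :=
    mul_le_mul_of_nonneg_right h1 h2.le
  rw [inv_mul_cancel₀ h2.ne'] at h3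
  nlinarith

lemma exp_scale_bound {z t s : ℝ} (hz : 0 ≤ z) (ht : 1 ≤ t) (hs : 1 ≤ s) :
    Real.exp ((z/t) ^ s) ≤ 1 + (t ^ s)⁻¹ * Real.exp (2 * z ^ s) := by
  have ht0 : 0 < t := lt_of_lt_of_le one_pos ht
  have hts : (1:ℝ) ≤ t ^ s := by
    have := Real.rpow_le_rpow_of_exponent_le ht (le_trans zero_le_one hs : (0:ℝ) ≤ s)
    rwa [Real.rpow_zero] at this
  have hts0 : (0:ℝ) < t ^ s := lt_of_lt_of_le one_pos hts
  have hdiv : (z/t)^s = z^s / t^s := Real.div_rpow hz ht0.le s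
  set Z := z ^ s with hZ
  have hZ0 : 0 ≤ Z := Real.rpow_nonneg hz s
  set q := Z / t ^ s with hq
  have hqZ : q ≤ Z := div_le_self hZ0 hts
  have h1 : Real.exp q ≤ 1 + q * Real.exp q := exp_one_add_self_mul
  have h2 : q * Real.exp q ≤ q * Real.exp Z :=
    mul_le_mul_of_nonneg_left (Real.exp_le_exp.2 hqZ) (div_nonneg hZ0 hts0.le)
  have h3 : q * Real.exp Z = (t ^ s)⁻¹ * (Z * Real.exp Z) := by rw [hq]; ring
  have h4 : Z * Real.exp Z ≤ Real.exp (2 * Z) := by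
    have hZe : Z ≤ Real.exp Z := by linarith [Real.add_one_le_exp Z]
    calc Z * Real.exp Z ≤ Real.exp Z * Real.exp Z :=
          mul_le_mul_of_nonneg_right hZe (Real.exp_pos _).le
    _ = Real.exp (2 * Z) := by rw [← Real.exp_add]; ring_nf
  have h5 : (t ^ s)⁻¹ * (Z * Real.exp Z) ≤ (t ^ s)⁻¹ * Real.exp (2 * Z) :=
    mul_le_mul_of_nonneg_left h4 (inv_nonneg.2 hts0.le)
  rw [hdiv]
  calc Real.exp (Z / t ^ s) ≤ 1 + q * Real.exp q := h1
  _ ≤ 1 + (t ^ s)⁻¹ * Real.exp (2 * Z) := by linarith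
lemma lux_nonempty {X : Type*} [MeasurableSpace X] (Q₀ : Measure X) [IsProbabilityMeasure Q₀]
    {s : ℝ} (hs : 1 ≤ s) {f : X → ℝ}
    (hff : ∀ c > 0, ∫⁻ x, ENNReal.ofReal (Real.exp ((|f x| / c) ^ s)) ∂Q₀ < ⊤) :
    ∃ t, 0 < t ∧ ∫⁻ x, ENNReal.ofReal (Real.exp ((|f x| / t) ^ s)) ∂Q₀ ≤ 2 := by
  have hs0 : (0:ℝ) < s := lt_of_lt_of_le one_pos hs
  set c₂ : ℝ := ((1:ℝ)/2) ^ s⁻¹ with hc₂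
  have hc₂0 : 0 < c₂ := Real.rpow_pos_of_pos (by norm_num) _
  have hc₂s : c₂ ^ s = 1/2 := by
    rw [hc₂, ← Real.rpow_mul (by norm_num : (0:ℝ) ≤ 1/2), inv_mul_cancel₀ hs0.ne',
      Real.rpow_one]
  have hkey : ∀ z : ℝ, 0 ≤ z → (z / c₂) ^ s = 2 * z ^ s := fun z hz => by
    rw [Real.div_rpow hz hc₂0.le s, hc₂s]
    rw [div_eq_mul_inv, one_div, inv_inv]
    ring
  set I₂ := ∫⁻ x, ENNReal.ofReal (Real.exp (2 * |f x| ^ s)) ∂Q₀ with hI₂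
  have hI₂top : I₂ < ⊤ := by
    refine lt_of_eq_of_lt (lintegral_congr fun x => ?_) (hff c₂ hc₂0)
    rw [hkey _ (abs_nonneg _)]
  set K := I₂.toReal + 1 with hK
  have hK1 : 1 ≤ K := by
    have := ENNReal.toReal_nonneg (a := I₂); linarith
  have hK0 : 0 < K := lt_of_lt_of_le one_pos hK1
  refine ⟨K, hK0, ?_⟩
  have hpt : ∀ x, ENNReal.ofReal (Real.exp ((|f x| / K) ^ s))
      ≤ 1 + ENNReal.ofReal ((K ^ s)⁻¹) * ENNReal.ofReal (Real.exp (2 * |f x| ^ s)) := by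
    intro x
    have h := exp_scale_bound (abs_nonneg (f x)) hK1 hs
    calc ENNReal.ofReal (Real.exp ((|f x| / K) ^ s))
        ≤ ENNReal.ofReal (1 + (K ^ s)⁻¹ * Real.exp (2 * |f x| ^ s)) :=
          ENNReal.ofReal_le_ofReal h
    _ = 1 + ENNReal.ofReal ((K ^ s)⁻¹ * Real.exp (2 * |f x| ^ s)) := by
        rw [ENNReal.ofReal_add (by norm_num) (by positivity), ENNReal.ofReal_one]
    _ = 1 + ENNReal.ofReal ((K ^ s)⁻¹) * ENNReal.ofReal (Real.exp (2 * |f x| ^ s)) := by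
        rw [ENNReal.ofReal_mul (by positivity)]
  have hle1 : ENNReal.ofReal ((K ^ s)⁻¹) * I₂ ≤ 1 := by
    have hKs : K ≤ K ^ s := by
      have := Real.rpow_le_rpow_of_exponent_le hK1 hs
      rwa [Real.rpow_one] at this
    have h6 : (K ^ s)⁻¹ ≤ K⁻¹ := by
      apply inv_anti₀ hK0 hKs
    have h7 : I₂ ≤ ENNReal.ofReal K := by
      rw [← ENNReal.ofReal_toReal hI₂top.ne]
      exact ENNReal.ofReal_le_ofReal (by linarith)
    calc ENNReal.ofReal ((K ^ s)⁻¹) * I₂ ≤ ENNReal.ofReal K⁻¹ * ENNReal.ofReal K :=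
          mul_le_mul' (ENNReal.ofReal_le_ofReal h6) h7
    _ = ENNReal.ofReal (K⁻¹ * K) := (ENNReal.ofReal_mul (inv_nonneg.2 hK0.le)).symm
    _ = 1 := by rw [inv_mul_cancel₀ hK0.ne', ENNReal.ofReal_one]
  calc ∫⁻ x, ENNReal.ofReal (Real.exp ((|f x| / K) ^ s)) ∂Q₀
      ≤ ∫⁻ x, (1 + ENNReal.ofReal ((K ^ s)⁻¹) * ENNReal.ofReal (Real.exp (2 * |f x| ^ s))) ∂Q₀ :=
        lintegral_mono hpt
  _ = 1 + ENNReal.ofReal ((K ^ s)⁻¹) * I₂ := by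
      rw [lintegral_add_left measurable_const, lintegral_const_mul' _ _ ENNReal.ofReal_ne_top,
        lintegral_const, measure_univ, mul_one]
  _ ≤ 1 + 1 := add_le_add_right hle1 1
  _ = 2 := one_add_one_eq_two

lemma rescale_lemma {X : Type*} [MeasurableSpace X] (Q₀ : Measure X) [IsProbabilityMeasure Q₀]
    {s : ℝ} (hs : 1 ≤ s) {g : X → ℝ} (hg : Measurable g) {u : ℝ} (hu : 0 < u)
    {B : ℝ≥0∞} (hB2 : 2 ≤ B) (hBtop : B ≠ ⊤) {Λ : ℝ} (hΛ : Λ = B.toReal ^ (2:ℕ))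
    (hI : ∫⁻ x, ENNReal.ofReal (Real.exp ((|g x| / u) ^ s)) ∂Q₀ ≤ B) :
    ∫⁻ x, ENNReal.ofReal (Real.exp ((|g x| / (Λ * u)) ^ s)) ∂Q₀ ≤ 2 := by
  have hs0 : (0:ℝ) < s := lt_of_lt_of_le one_pos hs
  set b := B.toReal with hb
  have hb2 : (2:ℝ) ≤ b := by
    have := ENNReal.toReal_mono hBtop hB2
    simpa using this
  have hb0 : 0 < b := by linarith
  have hΛ1 : (1:ℝ) ≤ Λ := by rw [hΛ]; nlinarith
  have hΛ0 : (0:ℝ) < Λ := by linarith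
  have hΛs1 : (1:ℝ) ≤ Λ ^ s := by
    have := Real.rpow_le_rpow_of_exponent_le hΛ1 (le_trans zero_le_one hs : (0:ℝ) ≤ s)
    rwa [Real.rpow_zero] at this
  have hΛs0 : (0:ℝ) < Λ ^ s := lt_of_lt_of_le one_pos hΛs1
  set ρ := (Λ ^ s)⁻¹ with hρ
  have hρ0 : 0 < ρ := inv_pos.2 hΛs0
  have hρ1 : ρ ≤ 1 := by
    rw [hρ]
    exact inv_le_one_of_one_le₀ hΛs1
  have hpt : ∀ x, ENNReal.ofReal (Real.exp ((|g x| / (Λ * u)) ^ s))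
      = (ENNReal.ofReal (Real.exp ((|g x| / u) ^ s))) ^ ρ := by
    intro x
    have h1 : |g x| / (Λ * u) = (|g x| / u) / Λ := by
      rw [div_div, mul_comm]
    have h2 : ((|g x| / u) / Λ) ^ s = (|g x| / u) ^ s * ρ := by
      rw [Real.div_rpow (div_nonneg (abs_nonneg _) hu.le) hΛ0.le s, div_eq_mul_inv, hρ]
    rw [h1, h2, Real.exp_mul, ENNReal.ofReal_rpow_of_pos (Real.exp_pos _)]
  have hFm : Measurable fun x => ENNReal.ofReal (Real.exp ((|g x| / u) ^ s)) :=
    (((hg.abs.div_const u).pow measurable_const).exp).ennreal_ofReal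
  calc ∫⁻ x, ENNReal.ofReal (Real.exp ((|g x| / (Λ * u)) ^ s)) ∂Q₀
      = ∫⁻ x, (ENNReal.ofReal (Real.exp ((|g x| / u) ^ s))) ^ ρ ∂Q₀ :=
        lintegral_congr hpt
  _ ≤ (∫⁻ x, ENNReal.ofReal (Real.exp ((|g x| / u) ^ s)) ∂Q₀) ^ ρ :=
        lint_rpow_le Q₀ hFm.aemeasurable hρ0 hρ1
  _ ≤ B ^ ρ := ENNReal.rpow_le_rpow hI hρ0.le
  _ ≤ 2 := by
      rw [← ENNReal.ofReal_toReal hBtop, ENNReal.ofReal_rpow_of_pos hb0]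
      have hlog : b ^ ρ ≤ 2 := by
        have hρΛ : ρ ≤ Λ⁻¹ := by
          rw [hρ]
          exact inv_anti₀ hΛ0 (by
            have := Real.rpow_le_rpow_of_exponent_le hΛ1 hs
            rwa [Real.rpow_one] at this)
        have hlogb : 0 ≤ Real.log b := Real.log_nonneg (by linarith)
        have hkey : Real.log b ≤ Λ * Real.log 2 := by
          rw [hΛ]
          have hl1 := Real.log_le_sub_one_of_pos hb0
          have hl2 : (0.6931471803 : ℝ) < Real.log 2 := Real.log_two_gt_d9
          nlinarith [sq_nonneg (b - 1), sq_nonneg b]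
        have : ρ * Real.log b ≤ Real.log 2 := by
          calc ρ * Real.log b ≤ Λ⁻¹ * Real.log b := mul_le_mul_of_nonneg_right hρΛ hlogb
          _ ≤ Real.log 2 := by
              rw [← div_eq_inv_mul, div_le_iff₀ hΛ0]
              calc Real.log b ≤ Λ * Real.log 2 := hkey
              _ = Real.log 2 * Λ := mul_comm _ _
        calc b ^ ρ = Real.exp (Real.log b * ρ) := by
              rw [Real.rpow_def_of_pos hb0]
        _ ≤ Real.exp (Real.log 2) := Real.exp_le_exp.2 (by linarith [this])
        _ = 2 := Real.exp_log two_pos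
      calc ENNReal.ofReal (b ^ ρ) ≤ ENNReal.ofReal 2 := ENNReal.ofReal_le_ofReal hlog
      _ = 2 := by norm_num
/-- In the dynamic discrete choice setting, the subgradient operator
`D_v f(x) = β Σ_d w_{d,v}(x) E^M[f|x,d]` built from the conditional choice probabilities
`w_{d,v}` maps the Orlicz heart `E^{φ_s}(Q₀)` to itself for every `s ≥ 1`, and its
spectral radius is at most `c` for every `c ∈ (β,1)`; in particular it is `< 1`. -/
theorem stmt15 {X : Type*} [MeasurableSpace X] (D : ℕ) (hD : 0 < D)
    (M : Fin D → Kernel X X) (hM : ∀ d, IsMarkovKernel (M d))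
    (u : Fin D → X → ℝ) (hum : ∀ d, Measurable (u d))
    (β : ℝ) (hβ : β ∈ Set.Ioo (0 : ℝ) 1)
    (Q₀ : Measure X) [IsProbabilityMeasure Q₀]
    -- stationarity of Q₀ for the uniform mixture kernel
    (hstat : ∀ s : Set X, MeasurableSet s →
      ∫⁻ x, ((D : ENNReal))⁻¹ * ∑ d, (M d) x s ∂Q₀ = Q₀ s)
    (v : X → ℝ) (hv : Measurable v)
    (w : Fin D → X → ℝ)
    (hw : ∀ d x, w d x = Real.exp (u d x + β * ∫ y, v y ∂((M d) x)) /
      ∑ d', Real.exp (u d' x + β * ∫ y, v y ∂((M d') x)))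
    (Dv : (X → ℝ) → X → ℝ)
    (hDv : ∀ f x, Dv f x = β * ∑ d, w d x * ∫ y, f y ∂((M d) x)) :
    ∀ s : ℝ, 1 ≤ s →
      (∀ f : X → ℝ, InHeart Q₀ s f → InHeart Q₀ s (Dv f)) ∧
      (∀ c : ℝ, β < c → c < 1 → ∃ C : ℝ, 0 < C ∧
        ∀ (n : ℕ) (f : X → ℝ), InHeart Q₀ s f →
          luxS Q₀ s (Dv^[n] f) ≤ C * c ^ n * luxS Q₀ s f) := by
  intro s hs
  obtain ⟨hβ0, hβ1⟩ := hβ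
  have hs0 : (0:ℝ) < s := lt_of_lt_of_le one_pos hs
  have hne : (Finset.univ : Finset (Fin D)).Nonempty := ⟨⟨0, hD⟩, Finset.mem_univ _⟩
  have hkint : ∀ (g : X → ℝ), Measurable g → ∀ d : Fin D,
      Measurable fun x => ∫ y, g y ∂(M d) x := by
    intro g hg d
    haveI := hM d
    have h1 : StronglyMeasurable (Function.uncurry fun (_ : X) (y : X) => g y) :=
      (hg.comp measurable_snd).stronglyMeasurable
    exact (StronglyMeasurable.integral_kernel_prod_right (κ := M d) h1).measurable
  have hw0 : ∀ d x, 0 ≤ w d x := by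
    intro d x; rw [hw]
    exact div_nonneg (Real.exp_pos _).le (Finset.sum_nonneg fun d' _ => (Real.exp_pos _).le)
  have hSpos : ∀ x, 0 < ∑ d', Real.exp (u d' x + β * ∫ y, v y ∂(M d') x) := fun x =>
    Finset.sum_pos (fun d' _ => Real.exp_pos _) hne
  have hw1 : ∀ d x, w d x ≤ 1 := by
    intro d x; rw [hw, div_le_one (hSpos x)]
    exact Finset.single_le_sum
      (f := fun d' => Real.exp (u d' x + β * ∫ y, v y ∂(M d') x))
      (fun d' _ => (Real.exp_pos _).le) (Finset.mem_univ d)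
  have hwsum : ∀ x, ∑ d, w d x = 1 := by
    intro x
    have h1 : ∑ d, w d x = (∑ d, Real.exp (u d x + β * ∫ y, v y ∂(M d) x)) /
        (∑ d', Real.exp (u d' x + β * ∫ y, v y ∂(M d') x)) := by
      rw [Finset.sum_div]; exact Finset.sum_congr rfl fun d _ => hw d x
    rw [h1, div_self (hSpos x).ne']
  have hwm : ∀ d, Measurable (w d) := by
    intro d
    have h1 : w d = fun x => Real.exp (u d x + β * ∫ y, v y ∂(M d) x) /
        ∑ d', Real.exp (u d' x + β * ∫ y, v y ∂(M d') x) := funext fun x => hw d x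
    rw [h1]
    exact (((hum d).add (measurable_const.mul (hkint v hv d))).exp).div
      (Finset.measurable_sum _ fun d' _ =>
        (((hum d').add (measurable_const.mul (hkint v hv d'))).exp))
  have hDvm : ∀ g : X → ℝ, Measurable g → Measurable (Dv g) := by
    intro g hg
    have h1 : Dv g = fun x => β * ∑ d, w d x * ∫ y, g y ∂(M d) x := funext fun x => hDv g x
    rw [h1]
    exact measurable_const.mul (Finset.measurable_sum _ fun d _ => (hwm d).mul (hkint g hg d))
  have hDviter : ∀ (f : X → ℝ), Measurable f → ∀ n, Measurable (Dv^[n] f) := by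
    intro f hf n
    induction n with
    | zero => exact hf
    | succ n ih => rw [Function.iterate_succ_apply']; exact hDvm _ ih
  have hΦm : ∀ (g : X → ℝ), Measurable g → ∀ t : ℝ,
      Measurable fun y => ENNReal.ofReal (Real.exp ((|g y| / t) ^ s)) := fun g hg t =>
    (((hg.abs.div_const t).pow measurable_const).exp).ennreal_ofReal
  have hDne0 : (D:ℝ≥0∞) ≠ 0 := by exact_mod_cast hD.ne'
  have hDnetop : (D:ℝ≥0∞) ≠ ⊤ := ENNReal.natCast_ne_top D
  have hD1 : (1:ℝ≥0∞) ≤ (D:ℝ≥0∞) := by exact_mod_cast hD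
  -- the master bound
  have key : ∀ c : ℝ, β < c → ∀ (f : X → ℝ), Measurable f → ∀ (t : ℝ), 0 < t → ∀ n : ℕ,
      ∫⁻ x, ENNReal.ofReal (Real.exp ((|Dv^[n] f x| / (c ^ n * t)) ^ s)) ∂Q₀ ≤
        (D:ℝ≥0∞) ^ ((((β/c)^s) / (1 - (β/c)^s)) : ℝ) *
          ((D:ℝ≥0∞) ^ n * ∫⁻ y, ENNReal.ofReal (Real.exp ((|f y| / t) ^ s)) ∂Q₀)
            ^ (((β/c)^s) ^ n) := by
    intro c hc f hf t ht n
    have hc0 : 0 < c := hβ0.trans hc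
    set θ : ℝ := (β/c) ^ s with hθdef
    have hθ0 : 0 < θ := Real.rpow_pos_of_pos (div_pos hβ0 hc0) s
    have hθ1 : θ < 1 := Real.rpow_lt_one (div_nonneg hβ0.le hc0.le)
      ((div_lt_one hc0).2 hc) hs0
    have h1θ : (0:ℝ) < 1 - θ := by linarith
    set a : ℝ := θ / (1 - θ) with hadef
    have ha0 : 0 ≤ a := div_nonneg hθ0.le h1θ.le
    have haθ : (a + 1) * θ = a := by
      rw [hadef]; field_simp; ring
    have hDa1 : (1:ℝ≥0∞) ≤ (D:ℝ≥0∞) ^ a := by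
      calc (1:ℝ≥0∞) = 1 ^ a := (ENNReal.one_rpow a).symm
      _ ≤ (D:ℝ≥0∞) ^ a := ENNReal.rpow_le_rpow hD1 ha0
    have hDanetop : (D:ℝ≥0∞) ^ a ≠ ⊤ := ENNReal.rpow_ne_top_of_nonneg ha0 hDnetop
    set Φ : X → ℝ≥0∞ := fun y => ENNReal.ofReal (Real.exp ((|f y| / t) ^ s)) with hΦdef
    have hΦmeas : Measurable Φ := hΦm f hf t
    -- pointwise master inequality
    have master : ∀ n x, ENNReal.ofReal (Real.exp ((|Dv^[n] f x| / (c ^ n * t)) ^ s)) ≤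
        (D:ℝ≥0∞) ^ a * ((Tsum M)^[n] Φ x) ^ (θ ^ n) := by
      intro n
      induction n with
      | zero =>
        intro x
        simp only [Function.iterate_zero, id_eq, pow_zero, one_mul, ENNReal.rpow_one]
        exact le_mul_of_one_le_left zero_le hDa1
      | succ n ih =>
        intro x
        have htn : 0 < c ^ n * t := mul_pos (pow_pos hc0 n) ht
        have hstep := step_lemma hD hM hβ0 hw0 hw1 hwsum hs hc (hDviter f hf n) htn x
        have heq1 : |Dv^[n+1] f x| / (c ^ (n+1) * t)
            = |β * ∑ d, w d x * ∫ y, Dv^[n] f y ∂(M d) x| / (c * (c ^ n * t)) := by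
          rw [Function.iterate_succ_apply', hDv, pow_succ]
          ring_nf
        rw [heq1]
        refine hstep.trans ?_
        set h := (Tsum M)^[n] Φ with hhdef
        have hhm : Measurable h := Tsum_iter_meas hM hΦmeas n
        set ρ : ℝ := θ ^ n with hρdef
        have hρ0 : 0 < ρ := pow_pos hθ0 n
        have hρ1 : ρ ≤ 1 := pow_le_one₀ hθ0.le hθ1.le
        have hinner : (∑ d, ∫⁻ y,
            ENNReal.ofReal (Real.exp ((|Dv^[n] f y| / (c ^ n * t)) ^ s)) ∂(M d) x)
            ≤ (D:ℝ≥0∞) ^ a * ((D:ℝ≥0∞) * (Tsum M h x) ^ ρ) := by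
          calc (∑ d, ∫⁻ y,
              ENNReal.ofReal (Real.exp ((|Dv^[n] f y| / (c ^ n * t)) ^ s)) ∂(M d) x)
              ≤ ∑ d, ∫⁻ y, (D:ℝ≥0∞) ^ a * (h y) ^ ρ ∂(M d) x :=
                Finset.sum_le_sum fun d _ => lintegral_mono (ih ·)
          _ = (D:ℝ≥0∞) ^ a * ∑ d, ∫⁻ y, (h y) ^ ρ ∂(M d) x := by
                rw [Finset.mul_sum]
                exact Finset.sum_congr rfl fun d _ => lintegral_const_mul' _ _ hDanetop
          _ ≤ (D:ℝ≥0∞) ^ a * ∑ d, (∫⁻ y, h y ∂(M d) x) ^ ρ := by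
                refine mul_le_mul_right (Finset.sum_le_sum fun d _ => ?_) _
                haveI := hM d
                exact lint_rpow_le ((M d) x) hhm.aemeasurable hρ0 hρ1
          _ ≤ (D:ℝ≥0∞) ^ a * ∑ d : Fin D, (Tsum M h x) ^ ρ := by
                refine mul_le_mul_right (Finset.sum_le_sum fun d _ => ?_) _
                refine ENNReal.rpow_le_rpow ?_ hρ0.le
                exact Finset.single_le_sum (f := fun d' => ∫⁻ y, h y ∂(M d') x)
                  (fun d' _ => zero_le) (Finset.mem_univ d)
          _ = (D:ℝ≥0∞) ^ a * ((D:ℝ≥0∞) * (Tsum M h x) ^ ρ) := by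
                rw [Finset.sum_const, Finset.card_univ, Fintype.card_fin, nsmul_eq_mul]
        calc (∑ d, ∫⁻ y,
            ENNReal.ofReal (Real.exp ((|Dv^[n] f y| / (c ^ n * t)) ^ s)) ∂(M d) x) ^ θ
            ≤ ((D:ℝ≥0∞) ^ a * ((D:ℝ≥0∞) * (Tsum M h x) ^ ρ)) ^ θ :=
              ENNReal.rpow_le_rpow hinner hθ0.le
        _ = (D:ℝ≥0∞) ^ a * ((Tsum M)^[n+1] Φ x) ^ (θ ^ (n+1)) := by
              rw [← mul_assoc, ENNReal.mul_rpow_of_nonneg _ _ hθ0.le]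
              congr 1
              · have hDD : ((D:ℝ≥0∞) ^ a * (D:ℝ≥0∞)) = (D:ℝ≥0∞) ^ (a + 1) := by
                  rw [ENNReal.rpow_add a 1 hDne0 hDnetop, ENNReal.rpow_one]
                rw [hDD, ← ENNReal.rpow_mul, haθ]
              · rw [← ENNReal.rpow_mul, Function.iterate_succ_apply']
                rw [hρdef, ← pow_succ]
    -- integrate the master inequality
    have hTn : ∀ m : ℕ, ∫⁻ x, (Tsum M)^[m] Φ x ∂Q₀ = (D:ℝ≥0∞) ^ m * ∫⁻ y, Φ y ∂Q₀ := by
      intro m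
      induction m with
      | zero => simp
      | succ m ih =>
        rw [Function.iterate_succ_apply']
        rw [stat_lint hD hM Q₀ hstat (Tsum_iter_meas hM hΦmeas m), ih, ← mul_assoc,
          ← pow_succ']
    calc ∫⁻ x, ENNReal.ofReal (Real.exp ((|Dv^[n] f x| / (c ^ n * t)) ^ s)) ∂Q₀
        ≤ ∫⁻ x, (D:ℝ≥0∞) ^ a * ((Tsum M)^[n] Φ x) ^ (θ ^ n) ∂Q₀ := lintegral_mono (master n)
    _ = (D:ℝ≥0∞) ^ a * ∫⁻ x, ((Tsum M)^[n] Φ x) ^ (θ ^ n) ∂Q₀ :=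
        lintegral_const_mul' _ _ hDanetop
    _ ≤ (D:ℝ≥0∞) ^ a * (∫⁻ x, (Tsum M)^[n] Φ x ∂Q₀) ^ (θ ^ n) := by
        refine mul_le_mul_right ?_ _
        exact lint_rpow_le Q₀ (Tsum_iter_meas hM hΦmeas n).aemeasurable (pow_pos hθ0 n)
          (pow_le_one₀ hθ0.le hθ1.le)
    _ = (D:ℝ≥0∞) ^ a * ((D:ℝ≥0∞) ^ n * ∫⁻ y, Φ y ∂Q₀) ^ (θ ^ n) := by rw [hTn n]
  constructor
  · -- heart preservation
    rintro f ⟨hfm, hff⟩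
    refine ⟨hDvm f hfm, ?_⟩
    intro c' hc'
    set c₀ : ℝ := (β + 1)/2 with hc₀def
    have hcb : β < c₀ := by rw [hc₀def]; linarith
    have hc₀0 : 0 < c₀ := hβ0.trans hcb
    have hu : 0 < c'/c₀ := div_pos hc' hc₀0
    have hkey1 := key c₀ hcb f hfm (c'/c₀) hu 1
    have heq : c₀ ^ 1 * (c'/c₀) = c' := by
      rw [pow_one]; field_simp
    rw [heq] at hkey1
    simp only [Function.iterate_one] at hkey1
    refine lt_of_le_of_lt hkey1 ?_
    have hθ0 : 0 < (β/c₀) ^ s := Real.rpow_pos_of_pos (div_pos hβ0 hc₀0) s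
    have hθ1 : (β/c₀) ^ s < 1 := Real.rpow_lt_one (div_nonneg hβ0.le hc₀0.le)
      ((div_lt_one hc₀0).2 hcb) hs0
    have ha0 : (0:ℝ) ≤ ((β/c₀)^s) / (1 - (β/c₀)^s) := div_nonneg hθ0.le (by linarith)
    refine ENNReal.mul_lt_top ?_ ?_
    · exact ENNReal.rpow_lt_top_of_nonneg ha0 hDnetop
    · refine ENNReal.rpow_lt_top_of_nonneg (pow_nonneg hθ0.le 1) ?_
      exact (ENNReal.mul_lt_top (ENNReal.pow_lt_top (n := 1) hDnetop.lt_top) (hff (c'/c₀) hu)).ne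
  · -- spectral radius bound
    intro c hcβ hc1
    have hc0 : 0 < c := hβ0.trans hcβ
    set θ : ℝ := (β/c) ^ s with hθdef
    have hθ0 : 0 < θ := Real.rpow_pos_of_pos (div_pos hβ0 hc0) s
    have hθ1 : θ < 1 := Real.rpow_lt_one (div_nonneg hβ0.le hc0.le)
      ((div_lt_one hc0).2 hcβ) hs0
    have h1θ : (0:ℝ) < 1 - θ := by linarith
    set a : ℝ := θ / (1 - θ) with hadef
    have ha0 : 0 ≤ a := div_nonneg hθ0.le h1θ.le
    have hDa1 : (1:ℝ≥0∞) ≤ (D:ℝ≥0∞) ^ a := by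
      calc (1:ℝ≥0∞) = 1 ^ a := (ENNReal.one_rpow a).symm
      _ ≤ (D:ℝ≥0∞) ^ a := ENNReal.rpow_le_rpow hD1 ha0
    have hDanetop : (D:ℝ≥0∞) ^ a ≠ ⊤ := ENNReal.rpow_ne_top_of_nonneg ha0 hDnetop
    set B : ℝ≥0∞ := (D:ℝ≥0∞) ^ a * ((D:ℝ≥0∞) ^ a * 2) with hBdef
    have hB2 : 2 ≤ B := by
      calc (2:ℝ≥0∞) = 1 * (1 * 2) := by norm_num
      _ ≤ B := by
          rw [hBdef]
          exact mul_le_mul' hDa1 (mul_le_mul' hDa1 le_rfl)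
    have hBtop : B ≠ ⊤ := by
      rw [hBdef]
      exact (ENNReal.mul_lt_top hDanetop.lt_top
        (ENNReal.mul_lt_top hDanetop.lt_top (by norm_num))).ne
    set Λ : ℝ := B.toReal ^ (2:ℕ) with hΛdef
    have hb2 : (2:ℝ) ≤ B.toReal := by
      have := ENNReal.toReal_mono hBtop hB2
      simpa using this
    have hΛ0 : 0 < Λ := by rw [hΛdef]; positivity
    refine ⟨Λ, hΛ0, ?_⟩
    intro n f hfh
    obtain ⟨hfm, hff⟩ := hfh
    -- the Luxemburg sets
    set Sf := {t : ℝ | 0 < t ∧ ∫⁻ x, ENNReal.ofReal (Real.exp ((|f x| / t) ^ s)) ∂Q₀ ≤ 2}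
      with hSfdef
    have hSfne : Sf.Nonempty := by
      obtain ⟨t, ht0, ht2⟩ := lux_nonempty Q₀ hs hff
      exact ⟨t, ht0, ht2⟩
    have hmem : ∀ t ∈ Sf, luxS Q₀ s (Dv^[n] f) ≤ Λ * c ^ n * t := by
      rintro t ⟨ht0, ht2⟩
      have hIn : ∫⁻ x, ENNReal.ofReal (Real.exp ((|Dv^[n] f x| / (c ^ n * t)) ^ s)) ∂Q₀
          ≤ B := by
        refine (key c hcβ f hfm t ht0 n).trans ?_
        rw [hBdef]
        refine mul_le_mul_right ?_ _
        calc ((D:ℝ≥0∞) ^ n * ∫⁻ y, ENNReal.ofReal (Real.exp ((|f y| / t) ^ s)) ∂Q₀) ^ (θ ^ n)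
            ≤ ((D:ℝ≥0∞) ^ n * 2) ^ (θ ^ n) :=
              ENNReal.rpow_le_rpow (mul_le_mul_right ht2 _) (pow_pos hθ0 n).le
        _ = ((D:ℝ≥0∞) ^ n) ^ (θ ^ n : ℝ) * (2:ℝ≥0∞) ^ (θ ^ n : ℝ) :=
              ENNReal.mul_rpow_of_nonneg _ _ (pow_pos hθ0 n).le
        _ ≤ (D:ℝ≥0∞) ^ a * 2 := by
              refine mul_le_mul' ?_ ?_
              · rw [← ENNReal.rpow_natCast (D:ℝ≥0∞) n, ← ENNReal.rpow_mul]
                exact ENNReal.rpow_le_rpow_of_exponent_le hD1 (nmul_pow_le hθ0 hθ1 n)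
              · calc (2:ℝ≥0∞) ^ (θ ^ n : ℝ) ≤ (2:ℝ≥0∞) ^ (1:ℝ) :=
                    ENNReal.rpow_le_rpow_of_exponent_le (by norm_num)
                      (pow_le_one₀ hθ0.le hθ1.le)
                _ = 2 := ENNReal.rpow_one 2
      have hun : 0 < c ^ n * t := mul_pos (pow_pos hc0 n) ht0
      have hres := rescale_lemma Q₀ hs (hDviter f hfm n) hun hB2 hBtop hΛdef hIn
      have hmem2 : Λ * (c ^ n * t) ∈ {c' : ℝ | 0 < c' ∧
          ∫⁻ x, ENNReal.ofReal (Real.exp ((|Dv^[n] f x| / c') ^ s)) ∂Q₀ ≤ 2} :=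
        ⟨mul_pos hΛ0 hun, hres⟩
      have hbdd : BddBelow {c' : ℝ | 0 < c' ∧
          ∫⁻ x, ENNReal.ofReal (Real.exp ((|Dv^[n] f x| / c') ^ s)) ∂Q₀ ≤ 2} :=
        ⟨0, fun y hy => hy.1.le⟩
      calc luxS Q₀ s (Dv^[n] f) ≤ Λ * (c ^ n * t) := csInf_le hbdd hmem2
      _ = Λ * c ^ n * t := (mul_assoc _ _ _).symm
    have hpos : 0 < Λ * c ^ n := mul_pos hΛ0 (pow_pos hc0 n)
    have hlow : luxS Q₀ s (Dv^[n] f) / (Λ * c ^ n) ≤ sInf Sf := by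
      refine le_csInf hSfne fun t htS => ?_
      rw [div_le_iff₀ hpos]
      calc luxS Q₀ s (Dv^[n] f) ≤ Λ * c ^ n * t := hmem t htS
      _ = t * (Λ * c ^ n) := mul_comm _ _
    have hlux : luxS Q₀ s f = sInf Sf := rfl
    rw [div_le_iff₀ hpos] at hlow
    calc luxS Q₀ s (Dv^[n] f) ≤ sInf Sf * (Λ * c ^ n) := hlow
    _ = Λ * c ^ n * luxS Q₀ s f := by rw [hlux]; ring
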